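/- A polyanalytic function on ℂ that vanishes on a nonempty open subset of ℂ is identically zero. -/

import Mathlib

open Complex Filter Topology

private lemma entire_eq_zero_of_tendsto {g : ℂ → ℂ} (hg : Differentiable ℂ g) (p : ℂ)
    (u : ℕ → ℂ) (hu : Filter.Tendsto u Filter.atTop (𝓝[≠] p)) (h0 : ∀ k, g (u k) = 0) :
    ∀ z, g z = 0 := by
  have han : AnalyticOnNhd ℂ g Set.univ :=
    hg.differentiableOn.analyticOnNhd isOpen_univ
  have hfreq : ∃ᶠ z in 𝓝[≠] p, g z = 0 :=
    hu.frequently (Filter.Frequently.of_forall h0)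
  have := han.eqOn_zero_of_preconnected_of_frequently_eq_zero isPreconnected_univ
    (Set.mem_univ p) hfreq
  exact fun z => this (Set.mem_univ z)

private lemma aux_tendsto (p : ℂ) (v : ℂ) (hv : v ≠ 0) :
    Filter.Tendsto (fun k : ℕ => p + (1 / (k + 1) : ℝ) * v) Filter.atTop (𝓝[≠] p) := by
  apply tendsto_nhdsWithin_of_tendsto_nhds_of_eventually_within
  · have h1 : Filter.Tendsto (fun k : ℕ => (1 / (k + 1) : ℝ)) Filter.atTop (𝓝 0) :=
      tendsto_one_div_add_atTop_nhds_zero_nat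
    have h2 : Filter.Tendsto (fun k : ℕ => ((1 / (k + 1) : ℝ) : ℂ)) Filter.atTop (𝓝 0) := by
      simpa [Function.comp_def, Complex.ofReal_inv, Complex.ofReal_add, Complex.ofReal_natCast] using (Complex.continuous_ofReal.tendsto 0).comp h1
    have := (h2.mul_const v).const_add p
    simpa using this
  · filter_upwards with k
    have hk : ((1 / (k + 1) : ℝ) : ℂ) ≠ 0 := by
      simp only [ne_eq, Complex.ofReal_eq_zero]
      positivity
    simp only [Set.mem_compl_iff, Set.mem_singleton_iff, add_eq_left]
    exact mul_ne_zero hk hv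

/-- A polyanalytic function on ℂ that vanishes on a nonempty open set is identically zero. -/
theorem polyanalytic_identity_theorem (n : ℕ) (h : Fin n → ℂ → ℂ)
    (hh : ∀ j, Differentiable ℂ (h j)) (f : ℂ → ℂ)
    (hf : ∀ z, f z = ∑ j : Fin n, h j z * (starRingEnd ℂ z) ^ (j : ℕ))
    (U : Set ℂ) (hU : IsOpen U) (hUne : U.Nonempty)
    (hvanish : ∀ z ∈ U, f z = 0) :
    ∀ z, f z = 0 := by
  obtain ⟨z₀, hz₀⟩ := hUne
  obtain ⟨r, hr, hball⟩ := Metric.isOpen_iff.mp hU z₀ hz₀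
  -- Step 1: for every real s with |s| < r/2, the entire function
  -- w ↦ ∑ h j w * (2 Re z₀ + 2 s - w)^j vanishes identically.
  have step1 : ∀ s : ℝ, |s| < r / 2 → ∀ w : ℂ,
      ∑ j : Fin n, h j w * (((2 * z₀.re + 2 * s : ℝ) : ℂ) - w) ^ (j : ℕ) = 0 := by
    intro s hs
    set c : ℂ := ((2 * z₀.re + 2 * s : ℝ) : ℂ) with hc
    have hgdiff : Differentiable ℂ (fun w => ∑ j : Fin n, h j w * (c - w) ^ (j : ℕ)) := by
      apply Differentiable.fun_sum
      intro j _
      exact (hh j).mul (((differentiable_const c).sub differentiable_id).pow _)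
    set p : ℂ := z₀ + (s : ℂ) with hp
    set u : ℕ → ℂ := fun k => p + (1 / (k + 1) : ℝ) * ((r / 4 : ℝ) * Complex.I) with hudef
    apply entire_eq_zero_of_tendsto hgdiff p u
    · apply aux_tendsto
      simp only [ne_eq, mul_eq_zero, Complex.ofReal_eq_zero, Complex.I_ne_zero, or_false]
      positivity
    · intro k
      have hkpos : (0:ℝ) < 1 / (k + 1) := by positivity
      have hkle : (1 / (k + 1) : ℝ) ≤ 1 := by
        rw [div_le_one (by positivity)]
        linarith [Nat.cast_nonneg (α := ℝ) k]
      set t : ℝ := (1 / (k + 1) : ℝ) * (r / 4) with ht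
      have hueq : u k = z₀ + (s : ℂ) + (t : ℂ) * Complex.I := by
        simp only [hudef, hp, ht, Complex.ofReal_mul]
        ring
      have htpos : 0 < t := by positivity
      have htle : t ≤ r / 4 := by
        rw [ht]
        nlinarith
      -- u k ∈ ball z₀ r
      have hmem : u k ∈ U := by
        apply hball
        rw [Metric.mem_ball, hueq, Complex.dist_eq]
        have : z₀ + (s : ℂ) + (t : ℂ) * Complex.I - z₀ = (s : ℂ) + (t : ℂ) * Complex.I := by ring
        rw [this]
        calc ‖(s : ℂ) + (t : ℂ) * Complex.I‖ ≤ ‖(s : ℂ)‖ + ‖(t : ℂ) * Complex.I‖ :=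
              norm_add_le _ _
          _ = |s| + |t| := by simp [Complex.norm_real]
          _ < r / 2 + r / 4 := by
              apply add_lt_add_of_lt_of_le hs
              rw [abs_of_pos htpos]; exact htle
          _ < r := by linarith
      -- c - u k = conj (u k)
      have hconj : c - u k = (starRingEnd ℂ) (u k) := by
        rw [hueq, hc]
        simp only [map_add, map_mul, Complex.conj_ofReal, Complex.conj_I]
        rw [Complex.ofReal_add, Complex.ofReal_mul, Complex.ofReal_mul]
        have h2re : ((2:ℝ):ℂ) * (z₀.re : ℂ) = z₀ + (starRingEnd ℂ) z₀ := by
          rw [Complex.add_conj]; push_cast; ring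
        rw [h2re]
        push_cast
        ring
      have := hvanish (u k) hmem
      rw [hf (u k)] at this
      rw [← this]
      congr 1
      ext j
      rw [hconj]
  -- Step 2: fix z; the entire function Q(v) = ∑ h j z * v^j vanishes at
  -- the points (2 Re z₀ + 2 s) - z for s in a small interval, hence everywhere.
  intro z
  have hQdiff : Differentiable ℂ (fun v : ℂ => ∑ j : Fin n, h j z * v ^ (j : ℕ)) := by
    apply Differentiable.fun_sum
    intro j _
    exact (differentiable_const _).mul (differentiable_id.pow _)
  set p2 : ℂ := ((2 * z₀.re : ℝ) : ℂ) - z with hp2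
  set v : ℕ → ℂ := fun k => p2 + (1 / (k + 1) : ℝ) * ((r / 4 : ℝ) : ℂ) with hvdef
  have hQzero : ∀ w, ∑ j : Fin n, h j z * w ^ (j : ℕ) = 0 := by
    apply entire_eq_zero_of_tendsto hQdiff p2 v
    · apply aux_tendsto
      simp only [ne_eq, Complex.ofReal_eq_zero]
      positivity
    · intro k
      have hkpos : (0:ℝ) < 1 / (k + 1) := by positivity
      have hkle : (1 / (k + 1) : ℝ) ≤ 1 := by
        rw [div_le_one (by positivity)]
        linarith [Nat.cast_nonneg (α := ℝ) k]
      set s : ℝ := (1 / (k + 1) : ℝ) * (r / 8) with hsdef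
      have hspos : 0 < s := by positivity
      have hslt : |s| < r / 2 := by
        rw [abs_of_pos hspos, hsdef]
        nlinarith
      have := step1 s hslt z
      have hv : v k = ((2 * z₀.re + 2 * s : ℝ) : ℂ) - z := by
        simp only [hvdef, hp2, hsdef]
        push_cast
        ring
      rw [hv]
      exact this
  have := hQzero ((starRingEnd ℂ) z)
  rw [hf z]
  exact this
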